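/- Let M, M₁, M₂ be symmetric positive semi-definite n×n real matrices with M = M₁ + M₂, M₂ positive definite, and rank(M₁) < n. Then Tr(M⁻²) ≥ (n − rank(M₁)) / ‖M₂‖², where ‖M₂‖ denotes the operator (spectral) norm. -/

import Mathlib

/-- The ℓ²→ℓ² operator (spectral) norm of a square real matrix. -/
noncomputable def opNorm {n : ℕ} (M : Matrix (Fin n) (Fin n) ℝ) : ℝ :=
  ‖Matrix.toEuclideanCLM (𝕜 := ℝ) M‖

open Matrix Module in
private lemma toEuclideanLin_mul' {n : ℕ} (P Q : Matrix (Fin n) (Fin n) ℝ) :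
    Matrix.toEuclideanLin (𝕜 := ℝ) (P * Q) =
      (Matrix.toEuclideanLin (𝕜 := ℝ) P) ∘ₗ (Matrix.toEuclideanLin (𝕜 := ℝ) Q) := by
  refine LinearMap.ext fun x => ?_
  simp [Matrix.toEuclideanLin_apply, Matrix.mulVec_mulVec]

open Matrix Module Finset in
/-- Trace of the inverse squared: `Tr(M⁻²) ≥ (n − rank M₁)/‖M₂‖²`. -/
theorem trace_inv_sq_lower_bound {n : ℕ}
    (M M₁ M₂ : Matrix (Fin n) (Fin n) ℝ)
    (hM : M = M₁ + M₂) (h₁ : M₁.PosSemidef) (h₂ : M₂.PosDef)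
    (hrank : M₁.rank < n) :
    ((n - M₁.rank : ℕ) : ℝ) / (opNorm M₂) ^ 2 ≤ (M⁻¹ * M⁻¹).trace := by
  classical
  have hMpd : M.PosDef := hM ▸ Matrix.PosDef.posSemidef_add h₁ h₂
  set c : ℝ := opNorm M₂ with hc
  set A : EuclideanSpace ℝ (Fin n) →ₗ[ℝ] EuclideanSpace ℝ (Fin n) :=
    Matrix.toEuclideanLin (𝕜 := ℝ) M⁻¹ with hAdef
  -- `A` is self-adjoint
  have hAsa : LinearMap.adjoint A = A := by
    rw [hAdef, ← Matrix.toEuclideanLin_conjTranspose_eq_adjoint]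
    congr 1
    exact hMpd.inv.isHermitian
  -- the key pointwise estimate on kernel vectors of `M₁`
  have key : ∀ x : EuclideanSpace ℝ (Fin n),
      Matrix.toEuclideanLin (𝕜 := ℝ) M₁ x = 0 → ‖x‖ = 1 → 1 / c ^ 2 ≤ ‖A x‖ ^ 2 := by
    intro x hx hx1
    have hdet : IsUnit M.det := (Matrix.isUnit_iff_isUnit_det M).mp hMpd.isUnit
    have hsplit : M⁻¹ * M = M⁻¹ * M₁ + M⁻¹ * M₂ := by
      nth_rewrite 2 [hM]; rw [Matrix.mul_add]
    have hx2 : A (Matrix.toEuclideanLin (𝕜 := ℝ) M₂ x) = x := by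
      have h1 : Matrix.toEuclideanLin (𝕜 := ℝ) (M⁻¹ * M) x = x := by
        rw [Matrix.nonsing_inv_mul M hdet]
        simp [Matrix.toEuclideanLin_apply, Matrix.one_mulVec]
      rw [hsplit] at h1
      simpa [toEuclideanLin_mul', hx] using h1
    have hinner : (1 : ℝ) = inner ℝ (A x) (Matrix.toEuclideanLin (𝕜 := ℝ) M₂ x) := by
      have h2 : inner ℝ x x = (1 : ℝ) := by
        rw [real_inner_self_eq_norm_sq, hx1]; norm_num
      calc (1 : ℝ) = inner ℝ x x := h2.symm
        _ = inner ℝ x (A (Matrix.toEuclideanLin (𝕜 := ℝ) M₂ x)) := by rw [hx2]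
        _ = inner ℝ (A x) (Matrix.toEuclideanLin (𝕜 := ℝ) M₂ x) := by
            rw [← LinearMap.adjoint_inner_left, hAsa]
    have hB : ‖Matrix.toEuclideanLin (𝕜 := ℝ) M₂ x‖ ≤ c := by
      have hBe : Matrix.toEuclideanLin (𝕜 := ℝ) M₂ x
          = Matrix.toEuclideanCLM (𝕜 := ℝ) M₂ x := by
        rw [← Matrix.coe_toEuclideanCLM_eq_toEuclideanLin]; rfl
      rw [hBe]
      calc ‖Matrix.toEuclideanCLM (𝕜 := ℝ) M₂ x‖
          ≤ ‖Matrix.toEuclideanCLM (𝕜 := ℝ) M₂‖ * ‖x‖ :=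
            ContinuousLinearMap.le_opNorm _ _
        _ = c := by rw [hx1, mul_one, hc, opNorm]
    have h1le : (1 : ℝ) ≤ ‖A x‖ * c :=
      calc (1 : ℝ) = inner ℝ (A x) (Matrix.toEuclideanLin (𝕜 := ℝ) M₂ x) := hinner
        _ ≤ ‖A x‖ * ‖Matrix.toEuclideanLin (𝕜 := ℝ) M₂ x‖ := real_inner_le_norm _ _
        _ ≤ ‖A x‖ * c := mul_le_mul_of_nonneg_left hB (norm_nonneg _)
    have hcpos : 0 < c := by nlinarith [norm_nonneg (A x), norm_nonneg x]
    have hAx : 1 / c ≤ ‖A x‖ := by rw [div_le_iff₀ hcpos]; linarith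
    calc 1 / c ^ 2 = (1 / c) ^ 2 := by ring
      _ ≤ ‖A x‖ ^ 2 := pow_le_pow_left₀ (by positivity) hAx 2
  -- kernel of `M₁` and its dimension
  set K := LinearMap.ker (Matrix.toEuclideanLin (𝕜 := ℝ) M₁) with hKdef
  have hdim : finrank ℝ K = n - M₁.rank := by
    have hr : M₁.rank
        = finrank ℝ (LinearMap.range (Matrix.toEuclideanLin (𝕜 := ℝ) M₁)) := by
      rw [Matrix.toEuclideanLin_eq_toLin]
      exact Matrix.rank_eq_finrank_range_toLin M₁ (PiLp.basisFun _ _ _) (PiLp.basisFun _ _ _)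
    have hrn : finrank ℝ (LinearMap.range (Matrix.toEuclideanLin (𝕜 := ℝ) M₁))
        + finrank ℝ K = n := by
      rw [hKdef, LinearMap.finrank_range_add_finrank_ker, finrank_euclideanSpace_fin]
    omega
  set d := n - M₁.rank with hd
  -- orthonormal basis of `K`, pushed into the ambient space
  let bK : OrthonormalBasis (Fin d) ℝ K := (stdOrthonormalBasis ℝ K).reindex (finCongr hdim)
  let f : Fin d → EuclideanSpace ℝ (Fin n) := fun i => (bK i : EuclideanSpace ℝ (Fin n))
  have hf_on : Orthonormal ℝ f := bK.orthonormal.comp_linearIsometry K.subtypeₗᵢ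
  have hfinj : Function.Injective f := hf_on.linearIndependent.injective
  have hv_on : Orthonormal ℝ ((↑) : Set.range f → EuclideanSpace ℝ (Fin n)) :=
    hf_on.toSubtypeRange
  obtain ⟨u, b, hvu, hb⟩ := hv_on.exists_orthonormalBasis_extension
  -- trace identity
  have htr : (M⁻¹ * M⁻¹).trace = ∑ i : u, ‖A (b i)‖ ^ 2 := by
    have h0 : LinearMap.trace ℝ _ (Matrix.toEuclideanLin (𝕜 := ℝ) (M⁻¹ * M⁻¹))
        = (M⁻¹ * M⁻¹).trace := by
      rw [LinearMap.trace_eq_matrix_trace ℝ (PiLp.basisFun 2 ℝ (Fin n)),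
        Matrix.toEuclideanLin_eq_toLin, LinearMap.toMatrix_toLin]
    have h1 : LinearMap.trace ℝ _ (Matrix.toEuclideanLin (𝕜 := ℝ) (M⁻¹ * M⁻¹))
        = ∑ i : u, ‖A (b i)‖ ^ 2 := by
      rw [LinearMap.trace_eq_matrix_trace ℝ b.toBasis, Matrix.trace]
      refine Finset.sum_congr rfl fun i _ => ?_
      rw [Matrix.diag_apply, LinearMap.toMatrix_apply, OrthonormalBasis.coe_toBasis,
        OrthonormalBasis.coe_toBasis_repr_apply, OrthonormalBasis.repr_apply_apply,
        toEuclideanLin_mul']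
      show (inner ℝ (b i) (A (A (b i))) : ℝ) = ‖A (b i)‖ ^ 2
      rw [← LinearMap.adjoint_inner_left, hAsa, real_inner_self_eq_norm_sq]
    rw [← h0, h1]
  rw [htr]
  -- restrict the sum to the orthonormal set coming from `K`
  have hsum : ∑ i : u, ‖A (b i)‖ ^ 2 = ∑ x ∈ u, ‖A x‖ ^ 2 := by
    simp only [hb]
    exact Finset.sum_coe_sort u fun x => ‖A x‖ ^ 2
  rw [hsum]
  set vF : Finset (EuclideanSpace ℝ (Fin n)) := Finset.image f Finset.univ with hvF
  have hsub : vF ⊆ u := by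
    intro x hx
    rw [hvF, Finset.mem_image] at hx
    obtain ⟨j, -, rfl⟩ := hx
    exact hvu (Set.mem_range_self j)
  have hcard : vF.card = d := by
    rw [hvF, Finset.card_image_of_injective _ hfinj, Finset.card_univ, Fintype.card_fin]
  have hbound : ∀ x ∈ vF, 1 / c ^ 2 ≤ ‖A x‖ ^ 2 := by
    intro x hx
    rw [hvF, Finset.mem_image] at hx
    obtain ⟨j, -, rfl⟩ := hx
    refine key _ ?_ (hf_on.1 j)
    exact LinearMap.mem_ker.mp (bK j).2
  calc ((d : ℕ) : ℝ) / c ^ 2 = ∑ _x ∈ vF, 1 / c ^ 2 := by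
        rw [Finset.sum_const, hcard, nsmul_eq_mul]; ring
    _ ≤ ∑ x ∈ vF, ‖A x‖ ^ 2 := Finset.sum_le_sum hbound
    _ ≤ ∑ x ∈ u, ‖A x‖ ^ 2 :=
        Finset.sum_le_sum_of_subset_of_nonneg hsub fun x _ _ => sq_nonneg _
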